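/- Let N be a finite index set, and for i,j ∈ N let F_{ij} ∈ ℝ with F_{ij} ≥ 0 for i ≠ j. Let (v_i)_{i∈N} and (w_i)_{i∈N} be vectors with v_i > 0, w_i > 0 for all i. Suppose that for every i, F_{ii} v_i + ∑_{j≠i} F_{ij} v_j < 0, and that F w = χ w for some real χ. Then χ < 0. -/

import Mathlib

theorem stmt_6 {N : Type*} [Fintype N] [Nonempty N] [DecidableEq N]
    (F : N → N → ℝ) (hF : ∀ i j, i ≠ j → 0 ≤ F i j)
    (v w : N → ℝ) (hv : ∀ i, 0 < v i) (hw : ∀ i, 0 < w i)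
    (hrow : ∀ i, F i i * v i + ∑ j ∈ Finset.univ.erase i, F i j * v j < 0)
    (χ : ℝ) (heig : ∀ i, ∑ j, F i j * w j = χ * w i) :
    χ < 0 := by
  obtain ⟨i, -, hi⟩ := Finset.exists_max_image Finset.univ (fun j => w j / v j)
    ⟨Classical.arbitrary N, Finset.mem_univ _⟩
  set t := w i / v i with ht
  have htpos : 0 < t := div_pos (hw i) (hv i)
  have hwle : ∀ j, w j ≤ t * v j := by
    intro j
    have := hi j (Finset.mem_univ j)
    calc w j = (w j / v j) * v j := by field_simp [(hv j).ne']
    _ ≤ t * v j := mul_le_mul_of_nonneg_right this (hv j).le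
  have hwi : w i = t * v i := by rw [ht, div_mul_cancel₀ _ (hv i).ne']
  have key : χ * w i < 0 := by
    have h1 : ∑ j, F i j * w j
        ≤ F i i * (t * v i) + ∑ j ∈ Finset.univ.erase i, F i j * (t * v j) := by
      rw [← Finset.add_sum_erase _ _ (Finset.mem_univ i), hwi]
      gcongr with j hj
      · exact hF i j (Finset.ne_of_mem_erase hj).symm
      · exact hwle j
    have h2 : F i i * (t * v i) + ∑ j ∈ Finset.univ.erase i, F i j * (t * v j)
        = t * (F i i * v i + ∑ j ∈ Finset.univ.erase i, F i j * v j) := by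
      rw [mul_add, Finset.mul_sum]
      congr 1
      · ring
      · exact Finset.sum_congr rfl fun j _ => by ring
    have := mul_neg_of_pos_of_neg htpos (hrow i)
    rw [← heig i]
    linarith
  nlinarith [hw i, key]
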